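/- Let M be an operator on H_1 ⊗ H_0 and N an operator on H_2 ⊗ H_1. If M and N are both positive semidefinite, then their link product N * M = Tr_{H_1}[(I_{H_2} ⊗ M^{T_1})(N ⊗ I_{H_0})] is positive semidefinite. -/

import Mathlib

open Matrix
open scoped ComplexOrder

noncomputable section

namespace QLink

/-- Kronecker (tensor) product of two square matrices, on the product index set. -/
def kron {α β : Type} (A : Matrix α α ℂ) (B : Matrix β β ℂ) :
    Matrix (α × β) (α × β) ℂ := fun p q => A p.1 q.1 * B p.2 q.2

/-- Partial transpose on the first tensor factor. -/
def ptransposeFst {α β : Type} (M : Matrix (α × β) (α × β) ℂ) : Matrix (α × β) (α × β) ℂ :=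
  fun p q => M (q.1, p.2) (p.1, q.2)

/-- Partial transpose on the second tensor factor. -/
def ptransposeSnd {α β : Type} (M : Matrix (α × β) (α × β) ℂ) : Matrix (α × β) (α × β) ℂ :=
  fun p q => M (p.1, q.2) (q.1, p.2)

/-- Partial trace over the middle tensor factor. -/
def ptraceMid {α β γ : Type} [Fintype β] (X : Matrix (α × β × γ) (α × β × γ) ℂ) :
    Matrix (α × γ) (α × γ) ℂ :=
  fun p q => ∑ b : β, X (p.1, b, p.2) (q.1, b, q.2)

/-- Partial trace over the first tensor factor. -/
def ptraceFst {α β : Type} [Fintype α] (X : Matrix (α × β) (α × β) ℂ) : Matrix β β ℂ :=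
  fun p q => ∑ a : α, X (a, p) (a, q)

/-- The link product `N * M = Tr_{H₁}[(I_{H₂} ⊗ M^{T₁})(N ⊗ I_{H₀})]`, an operator on
`H₂ ⊗ H₀`, for `M` on `H₁ ⊗ H₀` and `N` on `H₂ ⊗ H₁`. -/
def linkNM {α0 α1 α2 : Type} [Fintype α0] [Fintype α1] [Fintype α2]
    [DecidableEq α0] [DecidableEq α1] [DecidableEq α2]
    (Nm : Matrix (α2 × α1) (α2 × α1) ℂ) (M : Matrix (α1 × α0) (α1 × α0) ℂ) :
    Matrix (α2 × α0) (α2 × α0) ℂ :=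
  ptraceMid ((kron (1 : Matrix α2 α2 ℂ) (ptransposeFst M)) *
    (Matrix.reindex (Equiv.prodAssoc α2 α1 α0) (Equiv.prodAssoc α2 α1 α0)
      (kron Nm (1 : Matrix α0 α0 ℂ))))

/-- The cyclic reordering `H₁ ⊗ H₀ ⊗ H₂ ≃ H₀ ⊗ H₂ ⊗ H₁`. -/
def cyc (α1 α0 α2 : Type) : α1 × α0 × α2 ≃ α0 × α2 × α1 where
  toFun p := (p.2.1, p.2.2, p.1)
  invFun p := (p.2.2, p.1, p.2.1)
  left_inv p := rfl
  right_inv p := rfl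

/-- The link product `M * N = Tr_{H₁}[(I_{H₀} ⊗ N^{T₁})(M ⊗ I_{H₂})]`, an operator on
`H₀ ⊗ H₂`, for `M` on `H₁ ⊗ H₀` and `N` on `H₂ ⊗ H₁` (here `N^{T₁}` is the partial
transpose of `N` on its `H₁` factor). -/
def linkMN {α0 α1 α2 : Type} [Fintype α0] [Fintype α1] [Fintype α2]
    [DecidableEq α0] [DecidableEq α1] [DecidableEq α2]
    (M : Matrix (α1 × α0) (α1 × α0) ℂ) (Nm : Matrix (α2 × α1) (α2 × α1) ℂ) :
    Matrix (α0 × α2) (α0 × α2) ℂ :=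
  ptraceFst ((Matrix.reindex (cyc α1 α0 α2).symm (cyc α1 α0 α2).symm
      (kron (1 : Matrix α0 α0 ℂ) (ptransposeSnd Nm))) *
    (Matrix.reindex (Equiv.prodAssoc α1 α0 α2) (Equiv.prodAssoc α1 α0 α2)
      (kron M (1 : Matrix α2 α2 ℂ))))

/-- `𝓜 ⊗ id_{L(K)}` applied to an operator on `H₀ ⊗ K`. -/
def mapTensorId {α0 α1 : Type} (f : Matrix α0 α0 ℂ →ₗ[ℂ] Matrix α1 α1 ℂ) (K : Type)
    (X : Matrix (α0 × K) (α0 × K) ℂ) : Matrix (α1 × K) (α1 × K) ℂ :=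
  fun p q => f (fun x y => X (x, p.2) (y, q.2)) p.1 q.1

/-- The unnormalized maximally entangled vector `|Ψ⟩ = Σ_i |i⟩|i⟩` on `H₀ ⊗ H₀`. -/
def maxEntVec (α0 : Type) [DecidableEq α0] : α0 × α0 → ℂ :=
  fun p => if p.1 = p.2 then 1 else 0

/-- The Choi-Jamiolkowski operator `M = (𝓜 ⊗ id)(|Ψ⟩⟨Ψ|)` of a linear map `𝓜`. -/
def choi {α0 α1 : Type} [DecidableEq α0]
    (f : Matrix α0 α0 ℂ →ₗ[ℂ] Matrix α1 α1 ℂ) : Matrix (α1 × α0) (α1 × α0) ℂ :=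
  mapTensorId f α0 (Matrix.vecMulVec (maxEntVec α0) (star (maxEntVec α0)))


lemma linkNM_apply {α0 α1 α2 : Type} [Fintype α0] [Fintype α1] [Fintype α2]
    [DecidableEq α0] [DecidableEq α1] [DecidableEq α2]
    (Nm : Matrix (α2 × α1) (α2 × α1) ℂ) (M : Matrix (α1 × α0) (α1 × α0) ℂ)
    (c c' : α2) (a a' : α0) :
    linkNM Nm M (c, a) (c', a') =
      ∑ e : α1, ∑ b : α1, Nm (c, e) (c', b) * M (e, a) (b, a') := by
  simp only [linkNM, ptraceMid, kron, ptransposeFst, Matrix.mul_apply, Fintype.sum_prod_type,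
    Matrix.one_apply, Equiv.prodAssoc, Matrix.reindex_apply, Matrix.submatrix_apply]
  simp
  rw [Finset.sum_comm]
  exact Finset.sum_congr rfl fun e _ => Finset.sum_congr rfl fun b _ => mul_comm _ _

lemma sum_swap4 {α β γ δ : Type} [Fintype α] [Fintype β] [Fintype γ] [Fintype δ]
    (F : α → β → γ → δ → ℂ) :
    ∑ a, ∑ b, ∑ c, ∑ d, F a b c d = ∑ c, ∑ d, ∑ a, ∑ b, F a b c d :=
  calc ∑ a, ∑ b, ∑ c, ∑ d, F a b c d
      = ∑ a, ∑ c, ∑ b, ∑ d, F a b c d :=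
        Finset.sum_congr rfl fun a _ => Finset.sum_comm
    _ = ∑ c, ∑ a, ∑ b, ∑ d, F a b c d := Finset.sum_comm
    _ = ∑ c, ∑ a, ∑ d, ∑ b, F a b c d :=
        Finset.sum_congr rfl fun c _ => Finset.sum_congr rfl fun a _ => Finset.sum_comm
    _ = ∑ c, ∑ d, ∑ a, ∑ b, F a b c d :=
        Finset.sum_congr rfl fun c _ => Finset.sum_comm

/-- The link product of positive semidefinite operators is positive
semidefinite. -/
theorem linkNM_posSemidef {α0 α1 α2 : Type} [Fintype α0] [Fintype α1] [Fintype α2]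
    [DecidableEq α0] [DecidableEq α1] [DecidableEq α2]
    (M : Matrix (α1 × α0) (α1 × α0) ℂ) (Nm : Matrix (α2 × α1) (α2 × α1) ℂ)
    (hM : M.PosSemidef) (hN : Nm.PosSemidef) :
    (linkNM Nm M).PosSemidef := by
  obtain ⟨A, rfl⟩ : ∃ A : Matrix (α1 × α0) (α1 × α0) ℂ, M = Aᴴ * A :=
    by letI := Matrix.instPartialOrder (n := (α1 × α0)) (𝕜 := ℂ); letI := Matrix.instStarOrderedRing (n := (α1 × α0)) (𝕜 := ℂ); letI := Matrix.instNonnegSpectrumClass (n := (α1 × α0)) (𝕜 := ℂ); exact CStarAlgebra.nonneg_iff_eq_star_mul_self.mp hM.nonneg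
  obtain ⟨B, rfl⟩ : ∃ B : Matrix (α2 × α1) (α2 × α1) ℂ, Nm = Bᴴ * B :=
    by letI := Matrix.instPartialOrder (n := (α2 × α1)) (𝕜 := ℂ); letI := Matrix.instStarOrderedRing (n := (α2 × α1)) (𝕜 := ℂ); letI := Matrix.instNonnegSpectrumClass (n := (α2 × α1)) (𝕜 := ℂ); exact CStarAlgebra.nonneg_iff_eq_star_mul_self.mp hN.nonneg
  set W : Matrix ((α2 × α1) × (α1 × α0)) (α2 × α0) ℂ :=
    Matrix.of fun j p => ∑ e : α1, B j.1 (p.1, e) * A j.2 (e, p.2) with hW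
  have key : linkNM (Bᴴ * B) (Aᴴ * A) = Wᴴ * W := by
    ext ⟨c, a⟩ ⟨c', a'⟩
    rw [linkNM_apply]
    have lhs : ∑ e : α1, ∑ b : α1, (Bᴴ * B) (c, e) (c', b) * (Aᴴ * A) (e, a) (b, a') =
        ∑ e : α1, ∑ b : α1, ∑ j : α2 × α1, ∑ k : α1 × α0,
          (star (B j (c, e)) * B j (c', b)) * (star (A k (e, a)) * A k (b, a')) := by
      refine Finset.sum_congr rfl fun e _ => Finset.sum_congr rfl fun b _ => ?_
      simp only [Matrix.mul_apply, Matrix.conjTranspose_apply]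
      rw [Finset.sum_mul_sum]
    have rhs : (Wᴴ * W) (c, a) (c', a') =
        ∑ j : α2 × α1, ∑ k : α1 × α0, ∑ e : α1, ∑ b : α1,
          (star (B j (c, e)) * B j (c', b)) * (star (A k (e, a)) * A k (b, a')) := by
      simp only [Matrix.mul_apply, Matrix.conjTranspose_apply, hW, Matrix.of_apply,
        Fintype.sum_prod_type, star_sum, Finset.sum_mul_sum, star_mul']
      refine Finset.sum_congr rfl fun j _ => Finset.sum_congr rfl fun k _ =>
        Finset.sum_congr rfl fun x _ => Finset.sum_congr rfl fun y _ =>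
        Finset.sum_congr rfl fun e _ => Finset.sum_congr rfl fun b _ => by ring
    rw [lhs, rhs, sum_swap4]
  rw [key]
  exact Matrix.posSemidef_conjTranspose_mul_self _

end QLink
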